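/- Suppose deg p > deg q and let d = deg p. If (u₀,u) ∈ ℝ^{n+1} satisfies q̃(u₀,u) = 1 where q̃(x₀,x) = x₀^d q(x/x₀), then u₀ ≠ 0. Consequently, for the constrained homogenized problem with constraint q̃ = 1 (and the homogenized equality/inequality constraints and x₀ ≥ 0), every feasible point has x₀ > 0 and p̃(u₀,u) = p(u/u₀)/q(u/u₀), hence s* = r*. -/

import Mathlib

open MvPolynomial

private lemma eval_smul_isHomogeneous {N k : ℕ} {F : MvPolynomial (Fin N) ℝ}
    (hF : F.IsHomogeneous k) (t : ℝ) (v : Fin N → ℝ) :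
    eval (t • v) F = t ^ k * eval v F := by
  rw [eval_eq, eval_eq, Finset.mul_sum]
  refine Finset.sum_congr rfl fun α hα => ?_
  rw [mem_support_iff] at hα
  have hdeg : ∑ i ∈ α.support, α i = k := by
    simpa [Finsupp.weight_apply, Finsupp.sum] using hF hα
  calc F.coeff α * ∏ i ∈ α.support, (t • v) i ^ α i
      = F.coeff α * ((∏ i ∈ α.support, t ^ α i) * ∏ i ∈ α.support, v i ^ α i) := by
        simp [← Finset.prod_mul_distrib, mul_pow]
    _ = t ^ k * (F.coeff α * ∏ i ∈ α.support, v i ^ α i) := by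
        rw [Finset.prod_pow_eq_pow_sum, hdeg]; ring

private lemma eval_zero_cons {n d : ℕ} {Q : MvPolynomial (Fin (n + 1)) ℝ}
    {q : MvPolynomial (Fin n) ℝ} (hQ : Q.IsHomogeneous d)
    (hQ1 : ∀ x : Fin n → ℝ, eval (Fin.cons 1 x) Q = eval x q)
    (hlt : q.totalDegree < d) (u : Fin (n + 1) → ℝ) (hu : u 0 = 0) :
    eval u Q = 0 := by
  set F := finSuccEquiv ℝ n Q with hF
  have hq : q = ∑ k ∈ Finset.range (F.natDegree + 1), F.coeff k := by
    apply MvPolynomial.funext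
    intro x
    have h1 := hQ1 x
    rw [eval_eq_eval_mv_eval'] at h1
    rw [← h1, Polynomial.eval_eq_sum_range' (n := F.natDegree + 1)
      (lt_of_le_of_lt Polynomial.natDegree_map_le (Nat.lt_succ_self _))]
    simp [Polynomial.coeff_map, ← hF]
  have hc0 : F.coeff 0 = 0 := by
    ext β
    rw [MvPolynomial.coeff_zero]
    by_contra hc
    rw [hF, finSuccEquiv_coeff_coeff] at hc
    have hdegβ : (Finsupp.cons 0 β).degree = d := by
      rw [Finsupp.degree_eq_weight_one]; exact hQ hc
    have hβ : β.degree = d := by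
      have h2 : (Finsupp.cons 0 β).degree = 0 + β.degree := by
        simpa [Finsupp.degree_apply, Finsupp.sum] using Finsupp.sum_cons n β 0
      omega
    have h0 : MvPolynomial.coeff β q = 0 := by
      apply coeff_eq_zero_of_totalDegree_lt
      rw [show ∑ i ∈ β.support, β i = β.degree from rfl, hβ]
      exact hlt
    rw [hq, MvPolynomial.coeff_sum] at h0
    rw [Finset.sum_eq_single 0 ?_ ?_] at h0
    · exact hc (by rw [← finSuccEquiv_coeff_coeff, ← hF]; exact h0)
    · intro k _ hk
      rw [finSuccEquiv_coeff_coeff]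
      apply hQ.coeff_eq_zero
      have h2 : (Finsupp.cons k β).degree = k + β.degree := by
        simpa [Finsupp.degree_apply, Finsupp.sum] using Finsupp.sum_cons n β k
      omega
    · intro h; exact absurd (Finset.mem_range.mpr (Nat.succ_pos _)) h
  have hcons : u = Fin.cons (u 0) (Fin.tail u) := (Fin.cons_self_tail u).symm
  rw [hcons, hu, eval_eq_eval_mv_eval', ← Polynomial.coeff_zero_eq_eval_zero,
    Polynomial.coeff_map, ← hF, hc0, map_zero]

/-- if `deg p > deg q` and `d = deg p`, then any point with
`q̃(u₀,u) = 1` has `u₀ ≠ 0`; consequently every feasible point of the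
homogenized problem has `x₀ > 0` with `p̃(u₀,u) = p(u/u₀)/q(u/u₀)`,
and hence `s* = r*`. -/
theorem deg_p_gt_deg_q_equivalence
    (n m₁ m₂ : ℕ)
    (p q : MvPolynomial (Fin n) ℝ)
    (h : Fin m₁ → MvPolynomial (Fin n) ℝ) (g : Fin m₂ → MvPolynomial (Fin n) ℝ)
    (d : ℕ) (hd : d = p.totalDegree) (hdeg : q.totalDegree < p.totalDegree)
    (P Q : MvPolynomial (Fin (n + 1)) ℝ)
    (hP : P.IsHomogeneous d)
    (hP1 : ∀ x : Fin n → ℝ, eval (Fin.cons 1 x) P = eval x p)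
    (hQ : Q.IsHomogeneous d)
    (hQ1 : ∀ x : Fin n → ℝ, eval (Fin.cons 1 x) Q = eval x q)
    (Hh : Fin m₁ → MvPolynomial (Fin (n + 1)) ℝ)
    (Hg : Fin m₂ → MvPolynomial (Fin (n + 1)) ℝ)
    (hHh : ∀ i, (Hh i).IsHomogeneous (h i).totalDegree)
    (hHh1 : ∀ i, ∀ x : Fin n → ℝ, eval (Fin.cons 1 x) (Hh i) = eval x (h i))
    (hHg : ∀ j, (Hg j).IsHomogeneous (g j).totalDegree)
    (hHg1 : ∀ j, ∀ x : Fin n → ℝ, eval (Fin.cons 1 x) (Hg j) = eval x (g j))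
    (sfeas : (Fin (n + 1) → ℝ) → Prop)
    (hsfeas : ∀ xt, sfeas xt ↔
      (∀ i, eval xt (Hh i) = 0) ∧ eval xt Q = 1 ∧
        (∀ j, 0 ≤ eval xt (Hg j)) ∧ 0 ≤ xt 0)
    (rfeas : (Fin n → ℝ) → Prop)
    (hrfeas : ∀ x, rfeas x ↔
      (∀ i, eval x (h i) = 0) ∧ (∀ j, 0 ≤ eval x (g j)) ∧ 0 < eval x q) :
    (∀ u : Fin (n + 1) → ℝ, eval u Q = 1 → u 0 ≠ 0) ∧
    (∀ u : Fin (n + 1) → ℝ, sfeas u → 0 < u 0 ∧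
      eval u P =
        eval (fun i : Fin n => u i.succ / u 0) p /
          eval (fun i : Fin n => u i.succ / u 0) q) ∧
    (⨅ xt : {xt : Fin (n + 1) → ℝ // sfeas xt}, ((eval xt.1 P : ℝ) : EReal)) =
      ⨅ x : {x : Fin n → ℝ // rfeas x},
        ((eval x.1 p / eval x.1 q : ℝ) : EReal) := by
    have hlt : q.totalDegree < d := hd ▸ hdeg
    have hd0 : 0 < d := by omega
    have claim1 : ∀ u : Fin (n + 1) → ℝ, eval u Q = 1 → u 0 ≠ 0 := by
      intro u h1 h0
      rw [eval_zero_cons hQ hQ1 hlt u h0] at h1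
      exact zero_ne_one h1
    have key : ∀ u : Fin (n + 1) → ℝ, u 0 ≠ 0 →
        u = u 0 • (Fin.cons 1 (fun i => u i.succ / u 0) : Fin (n + 1) → ℝ) := by
      intro u h0
      funext i
      refine Fin.cases ?_ (fun j => ?_) i
      · simp
      · simp only [Pi.smul_apply, Fin.cons_succ, smul_eq_mul]
        field_simp
    have claim2 : ∀ u : Fin (n + 1) → ℝ, sfeas u → 0 < u 0 ∧
        rfeas (fun i : Fin n => u i.succ / u 0) ∧
        eval u P = eval (fun i : Fin n => u i.succ / u 0) p /
            eval (fun i : Fin n => u i.succ / u 0) q := by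
      intro u hsu
      obtain ⟨hh, hq1, hg, h0⟩ := (hsfeas u).mp hsu
      have hne := claim1 u hq1
      have hpos : 0 < u 0 := lt_of_le_of_ne h0 (Ne.symm hne)
      have hpd : (0 : ℝ) < u 0 ^ d := pow_pos hpos d
      set x : Fin n → ℝ := fun i => u i.succ / u 0 with hx
      have hux := key u hne
      have hQe : u 0 ^ d * eval x q = 1 := by
        rw [← hQ1 x, ← eval_smul_isHomogeneous hQ, ← hux]; exact hq1
      have hqx : eval x q = (u 0 ^ d)⁻¹ := eq_inv_of_mul_eq_one_right hQe
      have hqpos : 0 < eval x q := by rw [hqx]; exact inv_pos.mpr hpd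
      have hPe : eval u P = u 0 ^ d * eval x p := by
        conv_lhs => rw [hux]
        rw [eval_smul_isHomogeneous hP, hP1]
      refine ⟨hpos, ?_, ?_⟩
      · rw [hrfeas]
        refine ⟨fun i => ?_, fun j => ?_, hqpos⟩
        · have := hh i
          rw [hux, eval_smul_isHomogeneous (hHh i), hHh1] at this
          have hk : (0:ℝ) < u 0 ^ (h i).totalDegree := pow_pos hpos _
          exact (mul_eq_zero.mp this).resolve_left (ne_of_gt hk)
        · have := hg j
          rw [hux, eval_smul_isHomogeneous (hHg j), hHg1] at this
          have hk : (0:ℝ) < u 0 ^ (g j).totalDegree := pow_pos hpos _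
          nlinarith
      · rw [hPe, hqx]; field_simp
    refine ⟨claim1, fun u hsu => ⟨(claim2 u hsu).1, (claim2 u hsu).2.2⟩, ?_⟩
    have claim3 : ∀ x : Fin n → ℝ, rfeas x → ∃ u, sfeas u ∧
        eval u P = eval x p / eval x q := by
      intro x hrx
      obtain ⟨hh, hg, hq⟩ := (hrfeas x).mp hrx
      set t : ℝ := (eval x q)⁻¹ ^ ((d : ℝ)⁻¹) with ht
      set v : Fin (n + 1) → ℝ := (Fin.cons 1 x : Fin (n + 1) → ℝ) with hv
      have htpos : 0 < t := Real.rpow_pos_of_pos (inv_pos.mpr hq) _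
      have htd : t ^ d = (eval x q)⁻¹ := by
        rw [ht, ← Real.rpow_natCast ((eval x q)⁻¹ ^ ((d : ℝ)⁻¹)) d,
          ← Real.rpow_mul (le_of_lt (inv_pos.mpr hq)),
          inv_mul_cancel₀ (by exact_mod_cast hd0.ne'), Real.rpow_one]
      refine ⟨t • v, ?_, ?_⟩
      · rw [hsfeas]
        refine ⟨fun i => ?_, ?_, fun j => ?_, ?_⟩
        · rw [eval_smul_isHomogeneous (hHh i), hv, hHh1, hh i, mul_zero]
        · rw [eval_smul_isHomogeneous hQ, hv, hQ1, htd]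
          field_simp
        · rw [eval_smul_isHomogeneous (hHg j), hv, hHg1]
          exact mul_nonneg (pow_nonneg htpos.le _) (hg j)
        · simpa [hv] using htpos.le
      · rw [eval_smul_isHomogeneous hP, hv, hP1, htd, div_eq_mul_inv]; ring
    apply le_antisymm
    · refine le_iInf fun x => ?_
      obtain ⟨u, hsu, hval⟩ := claim3 x.1 x.2
      exact iInf_le_of_le ⟨u, hsu⟩ (le_of_eq (by rw [hval]))
    · refine le_iInf fun u => ?_
      obtain ⟨-, hrx, hval⟩ := claim2 u.1 u.2
      exact iInf_le_of_le ⟨_, hrx⟩ (le_of_eq (by rw [hval]))
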